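/- arXiv:2603.24605 — 2 statements merged into one kernel-verified Lean document; each statement's English description precedes it below -/
import Mathlib

section
/- The bid–ask distance d is equivalent (within a factor 2) to the integral probability metric d̃ over differences of convex 1-Lipschitz functions: d(μ,ν) ≤ d̃(μ,ν) ≤ 2 d(μ,ν), where d̃(μ,ν) = sup { μ(ψ) − ν(ψ) : ψ = ψᵃ − ψᵇ with ψᵃ, ψᵇ convex and 1-Lipschitz }. -/
open MeasureTheory Set Filter Topology
open scoped NNReal ENNReal

noncomputable section

/-- Linear growth on the nonnegative half-line. -/
def LinGrowth (f : ℝ → ℝ) : Prop := ∃ C : ℝ, ∀ x ≥ (0:ℝ), |f x| ≤ C * (1 + x)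

/-- A probability measure on ℝ supported on ℝ₊ with finite first moment. -/
def IsP1 (μ : Measure ℝ) : Prop :=
  IsProbabilityMeasure μ ∧ (∀ᵐ x ∂μ, 0 ≤ x) ∧ Integrable id μ

/-- Convex order: integrals of convex linear-growth test functions are ordered. -/
def CvxOrder (μ ν : Measure ℝ) : Prop :=
  ∀ ψ : ℝ → ℝ, ConvexOn ℝ (Ici (0:ℝ)) ψ → LinGrowth ψ →
    ∫ x, ψ x ∂μ ≤ ∫ x, ψ x ∂ν

/-- The directed bid–ask distance. -/
def dirDist (μ ν : Measure ℝ) : ℝ :=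
  sSup {r : ℝ | ∃ ψ : ℝ → ℝ, ConvexOn ℝ (Ici (0:ℝ)) ψ ∧
    LipschitzOnWith 1 ψ (Ici (0:ℝ)) ∧ r = ∫ x, ψ x ∂μ - ∫ x, ψ x ∂ν}

/-- The (symmetrized) bid–ask distance. -/
def baDist (μ ν : Measure ℝ) : ℝ := (dirDist μ ν + dirDist ν μ) / 2

/-- The integral probability metric over differences of convex 1-Lipschitz functions. -/
def tldDist (μ ν : Measure ℝ) : ℝ :=
  sSup {r : ℝ | ∃ ψa ψb : ℝ → ℝ,
    ConvexOn ℝ (Ici (0:ℝ)) ψa ∧ LipschitzOnWith 1 ψa (Ici (0:ℝ)) ∧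
    ConvexOn ℝ (Ici (0:ℝ)) ψb ∧ LipschitzOnWith 1 ψb (Ici (0:ℝ)) ∧
    r = ∫ x, (ψa x - ψb x) ∂μ - ∫ x, (ψa x - ψb x) ∂ν}

/-- The extension `x ↦ ψ (max x 0)` of a 1-Lipschitz function on `Ici 0` is
globally 1-Lipschitz. -/
lemma ext_lip {ψ : ℝ → ℝ} (h : LipschitzOnWith 1 ψ (Ici 0)) :
    LipschitzWith 1 (fun x => ψ (max x 0)) := by
  have hmax : LipschitzWith 1 (fun x : ℝ => max x 0) := LipschitzWith.id.max_const 0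
  have hc := h.comp (hmax.lipschitzOnWith (s := univ))
    (fun x _ => mem_Ici.2 (le_max_right x 0))
  rw [lipschitzOnWith_univ] at hc
  simpa [Function.comp_def] using hc

lemma ext_integrable {μ : Measure ℝ} (hμ : IsP1 μ) {ψ : ℝ → ℝ}
    (h : LipschitzOnWith 1 ψ (Ici 0)) :
    Integrable (fun x => ψ (max x 0)) μ := by
  haveI := hμ.1
  have hL := ext_lip h
  have habs : Integrable (fun x : ℝ => |x|) μ := hμ.2.2.abs
  refine Integrable.mono ((integrable_const (|ψ 0|)).add habs)
    hL.continuous.aestronglyMeasurable ?_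
  filter_upwards with x
  have h1 : dist (ψ (max x 0)) (ψ (max 0 0)) ≤ 1 * dist x 0 := hL.dist_le_mul x 0
  simp only [max_self, Real.dist_eq, one_mul, sub_zero] at h1
  have h2 : |ψ (max x 0)| ≤ |ψ (max x 0) - ψ 0| + |ψ 0| := by
    calc |ψ (max x 0)| = |(ψ (max x 0) - ψ 0) + ψ 0| := by ring_nf
    _ ≤ |ψ (max x 0) - ψ 0| + |ψ 0| := abs_add_le _ _
  have h3 : (0:ℝ) ≤ |ψ 0| + |x| := by positivity
  simp only [Real.norm_eq_abs, Pi.add_apply]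
  rw [abs_of_nonneg h3]
  linarith

lemma lip_integrable {μ : Measure ℝ} (hμ : IsP1 μ) {ψ : ℝ → ℝ}
    (h : LipschitzOnWith 1 ψ (Ici 0)) : Integrable ψ μ := by
  refine (ext_integrable hμ h).congr ?_
  filter_upwards [hμ.2.1] with x hx
  rw [max_eq_left hx]

lemma dir_elem_le {μ ν : Measure ℝ} (hμ : IsP1 μ) (hν : IsP1 ν) {ψ : ℝ → ℝ}
    (h : LipschitzOnWith 1 ψ (Ici 0)) :
    ∫ x, ψ x ∂μ - ∫ x, ψ x ∂ν ≤ (∫ x, |x| ∂μ) + ∫ x, |x| ∂ν := by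
  have hμp := hμ.1
  have hνp := hν.1
  have hIμ := ext_integrable hμ h
  have hIν := ext_integrable hν h
  have habsμ : Integrable (fun x : ℝ => |x|) μ := hμ.2.2.abs
  have habsν : Integrable (fun x : ℝ => |x|) ν := hν.2.2.abs
  have hL := ext_lip h
  have bound : ∀ x : ℝ, |ψ (max x 0) - ψ 0| ≤ |x| := by
    intro x
    have h1 : dist (ψ (max x 0)) (ψ (max 0 0)) ≤ 1 * dist x 0 := hL.dist_le_mul x 0
    simpa [Real.dist_eq] using h1
  have eμ : ∫ x, ψ x ∂μ = ∫ x, ψ (max x 0) ∂μ := by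
    refine integral_congr_ae ?_
    filter_upwards [hμ.2.1] with x hx
    rw [max_eq_left hx]
  have eν : ∫ x, ψ x ∂ν = ∫ x, ψ (max x 0) ∂ν := by
    refine integral_congr_ae ?_
    filter_upwards [hν.2.1] with x hx
    rw [max_eq_left hx]
  have up : ∫ x, ψ (max x 0) ∂μ ≤ ψ 0 + ∫ x, |x| ∂μ := by
    have h1 : ∫ x, ψ (max x 0) ∂μ ≤ ∫ x, (ψ 0 + |x|) ∂μ := by
      refine integral_mono hIμ ((integrable_const _).add habsμ) (fun x => ?_)
      have := (abs_le.mp (bound x)).2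
      simp only [Pi.add_apply]
      linarith
    rwa [integral_add (integrable_const _) habsμ, integral_const, probReal_univ,
      smul_eq_mul, one_mul] at h1
  have down : ψ 0 - ∫ x, |x| ∂ν ≤ ∫ x, ψ (max x 0) ∂ν := by
    have h1 : ∫ x, (ψ 0 - |x|) ∂ν ≤ ∫ x, ψ (max x 0) ∂ν := by
      refine integral_mono ((integrable_const _).sub habsν) hIν (fun x => ?_)
      have := (abs_le.mp (bound x)).1
      simp only [Pi.sub_apply]
      linarith
    rwa [integral_sub (integrable_const _) habsν, integral_const, probReal_univ,
      smul_eq_mul, one_mul] at h1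
  rw [eμ, eν]
  linarith

lemma zero_mem_dir (μ ν : Measure ℝ) :
    (0:ℝ) ∈ {r : ℝ | ∃ ψ : ℝ → ℝ, ConvexOn ℝ (Ici (0:ℝ)) ψ ∧
      LipschitzOnWith 1 ψ (Ici (0:ℝ)) ∧ r = ∫ x, ψ x ∂μ - ∫ x, ψ x ∂ν} := by
  refine ⟨fun _ => 0, convexOn_const 0 (convex_Ici 0),
    ((LipschitzWith.const 0).weaken zero_le_one).lipschitzOnWith (s := Ici (0:ℝ)), by simp⟩

/-- `baDist` and `tldDist` are equivalent within a factor 2. -/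
theorem baDist_equiv_tldDist (μ ν : Measure ℝ) (hμ : IsP1 μ) (hν : IsP1 ν) :
    baDist μ ν ≤ tldDist μ ν ∧ tldDist μ ν ≤ 2 * baDist μ ν := by
  set M : ℝ := (∫ x, |x| ∂μ) + ∫ x, |x| ∂ν with hM
  -- bounded above of directed sets
  have hbddμν : BddAbove {r : ℝ | ∃ ψ : ℝ → ℝ, ConvexOn ℝ (Ici (0:ℝ)) ψ ∧
      LipschitzOnWith 1 ψ (Ici (0:ℝ)) ∧ r = ∫ x, ψ x ∂μ - ∫ x, ψ x ∂ν} := by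
    refine ⟨M, fun r hr => ?_⟩
    obtain ⟨ψ, _, hL, rfl⟩ := hr
    exact dir_elem_le hμ hν hL
  have hbddνμ : BddAbove {r : ℝ | ∃ ψ : ℝ → ℝ, ConvexOn ℝ (Ici (0:ℝ)) ψ ∧
      LipschitzOnWith 1 ψ (Ici (0:ℝ)) ∧ r = ∫ x, ψ x ∂ν - ∫ x, ψ x ∂μ} := by
    refine ⟨M, fun r hr => ?_⟩
    obtain ⟨ψ, _, hL, rfl⟩ := hr
    have := dir_elem_le hν hμ hL
    linarith
  -- split an element of the tld set
  have split : ∀ {ψa ψb : ℝ → ℝ}, LipschitzOnWith 1 ψa (Ici (0:ℝ)) →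
      LipschitzOnWith 1 ψb (Ici (0:ℝ)) →
      (∫ x, (ψa x - ψb x) ∂μ - ∫ x, (ψa x - ψb x) ∂ν) =
        ((∫ x, ψa x ∂μ) - ∫ x, ψa x ∂ν) + ((∫ x, ψb x ∂ν) - ∫ x, ψb x ∂μ) := by
    intro ψa ψb hLa hLb
    rw [integral_sub (lip_integrable hμ hLa) (lip_integrable hμ hLb),
      integral_sub (lip_integrable hν hLa) (lip_integrable hν hLb)]
    ring
  have hbddTld : BddAbove {r : ℝ | ∃ ψa ψb : ℝ → ℝ,
      ConvexOn ℝ (Ici (0:ℝ)) ψa ∧ LipschitzOnWith 1 ψa (Ici (0:ℝ)) ∧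
      ConvexOn ℝ (Ici (0:ℝ)) ψb ∧ LipschitzOnWith 1 ψb (Ici (0:ℝ)) ∧
      r = ∫ x, (ψa x - ψb x) ∂μ - ∫ x, (ψa x - ψb x) ∂ν} := by
    refine ⟨2 * M, fun r hr => ?_⟩
    obtain ⟨ψa, ψb, _, hLa, _, hLb, rfl⟩ := hr
    rw [split hLa hLb]
    have ha := dir_elem_le hμ hν hLa
    have hb := dir_elem_le hν hμ hLb
    rw [hM]; linarith
  have hzeroLip : LipschitzOnWith 1 (fun _ : ℝ => (0:ℝ)) (Ici (0:ℝ)) :=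
    ((LipschitzWith.const 0).weaken zero_le_one).lipschitzOnWith (s := Ici (0:ℝ))
  have hzeroCvx : ConvexOn ℝ (Ici (0:ℝ)) (fun _ : ℝ => (0:ℝ)) :=
    convexOn_const 0 (convex_Ici 0)
  constructor
  · -- baDist ≤ tldDist
    have h1 : dirDist μ ν ≤ tldDist μ ν := by
      refine csSup_le ⟨0, zero_mem_dir μ ν⟩ (fun r hr => ?_)
      obtain ⟨ψ, hcv, hL, rfl⟩ := hr
      refine le_csSup hbddTld ⟨ψ, fun _ => 0, hcv, hL, hzeroCvx, hzeroLip, by simp⟩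
    have h2 : dirDist ν μ ≤ tldDist μ ν := by
      refine csSup_le ⟨0, zero_mem_dir ν μ⟩ (fun r hr => ?_)
      obtain ⟨ψ, hcv, hL, rfl⟩ := hr
      refine le_csSup hbddTld ⟨fun _ => 0, ψ, hzeroCvx, hzeroLip, hcv, hL, ?_⟩
      simp only [zero_sub, integral_neg]
      ring
    rw [baDist]
    linarith
  · -- tldDist ≤ 2 * baDist
    have : tldDist μ ν ≤ dirDist μ ν + dirDist ν μ := by
      refine csSup_le ⟨0, ⟨fun _ => 0, fun _ => 0, hzeroCvx, hzeroLip, hzeroCvx,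
        hzeroLip, by simp⟩⟩ (fun r hr => ?_)
      obtain ⟨ψa, ψb, hcva, hLa, hcvb, hLb, rfl⟩ := hr
      rw [split hLa hLb]
      have ha : ((∫ x, ψa x ∂μ) - ∫ x, ψa x ∂ν) ≤ dirDist μ ν :=
        le_csSup hbddμν ⟨ψa, hcva, hLa, rfl⟩
      have hb : ((∫ x, ψb x ∂ν) - ∫ x, ψb x ∂μ) ≤ dirDist ν μ :=
        le_csSup hbddνμ ⟨ψb, hcvb, hLb, rfl⟩
      linarith
    rw [baDist]
    linarith
end
end

section
/- Linear convergence rate for differences of convex payoffs: if μᵇ ≼c μᵃ, μᵐ = (μᵇ + μᵃ)/2, and h = ψᵃ − ψᵇ for Lipschitz convex functions ψᵃ, ψᵇ, then 0 ≤ P(h) − μᵐ(h) ≤ (Lip(ψᵃ) + Lip(ψᵇ)) · d(μᵇ,μᵃ), where P(h) = sup_{μᵇ ≼c μ ≼c μᵃ} μ(h). -/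
open MeasureTheory Set Filter Topology
open scoped NNReal ENNReal

noncomputable section

/-- Primal BAMOT value for a single maturity. -/
def Pval (μb μa : Measure ℝ) (h : ℝ → ℝ) : ℝ :=
  sSup {r : ℝ | ∃ μ : Measure ℝ, IsP1 μ ∧ CvxOrder μb μ ∧ CvxOrder μ μa ∧
    r = ∫ x, h x ∂μ}

/- ### Auxiliary lemmas -/

lemma aesm_of_convexOn (μ : Measure ℝ) (hμ : ∀ᵐ x ∂μ, 0 ≤ x)
    (ψ : ℝ → ℝ) (hc : ConvexOn ℝ (Ici 0) ψ) : AEStronglyMeasurable ψ μ := by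
  have hres : μ.restrict (Ici 0) = μ :=
    Measure.restrict_eq_self_of_ae_mem (by simpa using hμ)
  have hsplit : μ.restrict (Ici (0:ℝ)) = μ.restrict {0} + μ.restrict (Ioi 0) := by
    rw [← Measure.restrict_union (by simp [Set.disjoint_left]) measurableSet_Ioi]
    congr 1
    ext x; simp [le_iff_lt_or_eq, or_comm, eq_comm]
  have h1 : AEStronglyMeasurable ψ (μ.restrict (Ioi 0)) := by
    have hco : ContinuousOn ψ (Ioi 0) :=
      ConvexOn.continuousOn isOpen_Ioi (hc.subset Ioi_subset_Ici_self (convex_Ioi 0))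
    exact hco.aestronglyMeasurable measurableSet_Ioi
  have h0 : AEStronglyMeasurable ψ (μ.restrict {0}) := by
    have heq : (fun _ : ℝ => ψ 0) =ᵐ[μ.restrict {0}] ψ := by
      rw [Filter.EventuallyEq, ae_restrict_iff' (measurableSet_singleton 0)]
      filter_upwards with x hx
      rw [mem_singleton_iff] at hx; rw [hx]
    exact aestronglyMeasurable_const.congr heq
  rw [← hres, hsplit]
  exact h0.add_measure h1

lemma integrable_linGrowth {μ : Measure ℝ} (hμ : IsP1 μ)
    {ψ : ℝ → ℝ} (hc : ConvexOn ℝ (Ici 0) ψ) (hg : LinGrowth ψ) : Integrable ψ μ := by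
  obtain ⟨hp, hpos, hint⟩ := hμ
  obtain ⟨C, hC⟩ := hg
  have hbound : ∀ᵐ x ∂μ, ‖ψ x‖ ≤ |C| * (1 + |x|) := by
    filter_upwards [hpos] with x hx
    have h1 := hC x hx
    have h2 : (0:ℝ) ≤ 1 + x := by linarith
    calc ‖ψ x‖ = |ψ x| := rfl
    _ ≤ C * (1 + x) := h1
    _ ≤ |C| * (1 + |x|) := by
        nlinarith [le_abs_self C, abs_nonneg C, le_abs_self x, abs_nonneg x]
  have hintmaj : Integrable (fun x : ℝ => |C| * (1 + |x|)) μ := by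
    have : Integrable (fun x : ℝ => 1 + |x|) μ := (integrable_const 1).add hint.abs
    exact this.const_mul _
  exact hintmaj.mono' (aesm_of_convexOn μ hpos ψ hc) hbound

lemma linGrowth_of_lipschitzOn {ψ : ℝ → ℝ} {L : ℝ≥0}
    (h : LipschitzOnWith L ψ (Ici 0)) : LinGrowth ψ := by
  refine ⟨|ψ 0| + L, fun x hx => ?_⟩
  have h1 : dist (ψ x) (ψ 0) ≤ L * dist x 0 := h.dist_le_mul x hx 0 (by simp)
  rw [Real.dist_eq, Real.dist_eq, sub_zero, abs_of_nonneg hx] at h1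
  have h2 : |ψ x| ≤ |ψ 0| + |ψ x - ψ 0| := by
    have := abs_add_le (ψ 0) (ψ x - ψ 0); simpa using this
  have h3 : (0:ℝ) ≤ L := L.2
  have h4 : (0:ℝ) ≤ |ψ 0| := abs_nonneg _
  nlinarith

lemma integral_half_measure (μb μa : Measure ℝ) {f : ℝ → ℝ}
    (h1 : Integrable f μb) (h2 : Integrable f μa) :
    ∫ x, f x ∂((2:ℝ≥0)⁻¹ • μb + (2:ℝ≥0)⁻¹ • μa)
      = (∫ x, f x ∂μb) / 2 + (∫ x, f x ∂μa) / 2 := by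
  rw [integral_add_measure h1.smul_measure_nnreal h2.smul_measure_nnreal,
    integral_smul_nnreal_measure, integral_smul_nnreal_measure]
  norm_num [NNReal.smul_def, div_eq_inv_mul]

/-- The midpoint measure is in P₁. -/
lemma isP1_mid {μb μa : Measure ℝ} (hb : IsP1 μb) (ha : IsP1 μa) :
    IsP1 ((2:ℝ≥0)⁻¹ • μb + (2:ℝ≥0)⁻¹ • μa) := by
  obtain ⟨hbp, hbpos, hbint⟩ := hb
  obtain ⟨hap, hapos, haint⟩ := ha
  refine ⟨?_, ?_, ?_⟩
  · constructor
    simp only [Measure.add_apply, Measure.smul_apply, measure_univ, ENNReal.smul_def,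
      smul_eq_mul, mul_one]
    rw [← two_mul, ENNReal.coe_inv (by norm_num), ENNReal.coe_ofNat,
      ENNReal.mul_inv_cancel] <;> norm_num
  · rw [ae_add_measure_iff]
    exact ⟨Measure.ae_smul_measure hbpos _, Measure.ae_smul_measure hapos _⟩
  · exact hbint.smul_measure_nnreal.add_measure haint.smul_measure_nnreal

lemma cvxOrder_mid_left {μb μa : Measure ℝ} (hb : IsP1 μb) (ha : IsP1 μa)
    (hord : CvxOrder μb μa) : CvxOrder μb ((2:ℝ≥0)⁻¹ • μb + (2:ℝ≥0)⁻¹ • μa) := by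
  intro ψ hc hg
  have i1 := integrable_linGrowth hb hc hg
  have i2 := integrable_linGrowth ha hc hg
  rw [integral_half_measure _ _ i1 i2]
  have := hord ψ hc hg
  linarith

lemma cvxOrder_mid_right {μb μa : Measure ℝ} (hb : IsP1 μb) (ha : IsP1 μa)
    (hord : CvxOrder μb μa) : CvxOrder ((2:ℝ≥0)⁻¹ • μb + (2:ℝ≥0)⁻¹ • μa) μa := by
  intro ψ hc hg
  have i1 := integrable_linGrowth hb hc hg
  have i2 := integrable_linGrowth ha hc hg
  rw [integral_half_measure _ _ i1 i2]
  have := hord ψ hc hg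
  linarith

/-- Elements of the dirDist set are bounded by first moments. -/
lemma dirDist_bddAbove {μ ν : Measure ℝ} (hμ : IsP1 μ) (hν : IsP1 ν) :
    BddAbove {r : ℝ | ∃ ψ : ℝ → ℝ, ConvexOn ℝ (Ici (0:ℝ)) ψ ∧
      LipschitzOnWith 1 ψ (Ici (0:ℝ)) ∧ r = ∫ x, ψ x ∂μ - ∫ x, ψ x ∂ν} := by
  refine ⟨(∫ x, x ∂μ) + ∫ x, x ∂ν, ?_⟩
  rintro r ⟨ψ, hc, hlip, rfl⟩
  have key : ∀ (κ : Measure ℝ), IsP1 κ → |(∫ x, ψ x ∂κ) - ψ 0| ≤ ∫ x, x ∂κ := by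
    intro κ hκ
    obtain ⟨hκp, hκpos, hκint⟩ := hκ
    have hiψ : Integrable ψ κ :=
      integrable_linGrowth ⟨hκp, hκpos, hκint⟩ hc (linGrowth_of_lipschitzOn hlip)
    have h0 : (∫ x, ψ x ∂κ) - ψ 0 = ∫ x, (ψ x - ψ 0) ∂κ := by
      rw [integral_sub hiψ (integrable_const _), integral_const, probReal_univ]
      simp
    rw [h0]
    have := norm_integral_le_integral_norm (μ := κ) (f := fun x => ψ x - ψ 0)
    refine le_trans this ?_
    refine integral_mono_ae ((hiψ.sub (integrable_const _)).norm) hκint ?_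
    filter_upwards [hκpos] with x hx
    have h1 : dist (ψ x) (ψ 0) ≤ 1 * dist x 0 := hlip.dist_le_mul x hx 0 (by simp)
    rw [Real.dist_eq, Real.dist_eq, sub_zero, abs_of_nonneg hx] at h1
    simpa [Real.norm_eq_abs, id] using h1.trans (by linarith)
  have k1 := key μ hμ
  have k2 := key ν hν
  have := abs_le.1 k1
  have := abs_le.1 k2
  linarith [(abs_le.1 k1).2, (abs_le.1 k2).1]

/-- The directed distance from below to above vanishes under convex order. -/
lemma dirDist_eq_zero {μb μa : Measure ℝ} (hb : IsP1 μb) (ha : IsP1 μa)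
    (hord : CvxOrder μb μa) : dirDist μb μa = 0 := by
  have h0mem : (0:ℝ) ∈ {r : ℝ | ∃ ψ : ℝ → ℝ, ConvexOn ℝ (Ici (0:ℝ)) ψ ∧
      LipschitzOnWith 1 ψ (Ici (0:ℝ)) ∧ r = ∫ x, ψ x ∂μb - ∫ x, ψ x ∂μa} := by
    refine ⟨fun _ => 0, convexOn_const 0 (convex_Ici 0),
      ((LipschitzWith.const 0).weaken (zero_le_one)).lipschitzOnWith, ?_⟩
    simp
  have hub : ∀ r ∈ {r : ℝ | ∃ ψ : ℝ → ℝ, ConvexOn ℝ (Ici (0:ℝ)) ψ ∧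
      LipschitzOnWith 1 ψ (Ici (0:ℝ)) ∧ r = ∫ x, ψ x ∂μb - ∫ x, ψ x ∂μa}, r ≤ 0 := by
    rintro r ⟨ψ, hc, hlip, rfl⟩
    have := hord ψ hc (linGrowth_of_lipschitzOn hlip)
    linarith
  exact le_antisymm (csSup_le ⟨0, h0mem⟩ hub) (le_csSup ⟨0, hub⟩ h0mem)

/-- Scaling: the difference of integrals of an `L`-Lipschitz convex function is
bounded by `L` times the directed distance. -/
lemma diff_le_dirDist {μ ν : Measure ℝ} (hμ : IsP1 μ) (hν : IsP1 ν)
    {ψ : ℝ → ℝ} {L : ℝ≥0} (hc : ConvexOn ℝ (Ici 0) ψ)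
    (hlip : LipschitzOnWith L ψ (Ici 0)) :
    (∫ x, ψ x ∂μ) - ∫ x, ψ x ∂ν ≤ (L:ℝ) * dirDist μ ν := by
  rcases eq_or_ne L 0 with hL | hL
  · subst hL
    have hconst : ∀ (κ : Measure ℝ), IsP1 κ → ∫ x, ψ x ∂κ = ψ 0 := by
      intro κ hκ
      obtain ⟨hκp, hκpos, _⟩ := hκ
      have : ψ =ᵐ[κ] fun _ => ψ 0 := by
        filter_upwards [hκpos] with x hx
        have h1 : dist (ψ x) (ψ 0) ≤ (0:ℝ≥0) * dist x 0 := hlip.dist_le_mul x hx 0 (by simp)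
        simp only [NNReal.coe_zero, zero_mul] at h1
        have := dist_nonneg (x := ψ x) (y := ψ 0)
        have : dist (ψ x) (ψ 0) = 0 := le_antisymm h1 this
        exact dist_eq_zero.mp this
      rw [integral_congr_ae this, integral_const, probReal_univ]
      simp
    rw [hconst μ hμ, hconst ν hν]
    simp
  · have hLpos : (0:ℝ) < L := by
      exact_mod_cast pos_iff_ne_zero.mpr hL
    set φ : ℝ → ℝ := fun x => (L:ℝ)⁻¹ * ψ x with hφ
    have hφc : ConvexOn ℝ (Ici (0:ℝ)) φ := by
      have := hc.smul (c := (L:ℝ)⁻¹) (by positivity)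
      simpa [hφ, smul_eq_mul] using this
    have hφlip : LipschitzOnWith 1 φ (Ici (0:ℝ)) := by
      apply LipschitzOnWith.of_dist_le_mul
      intro x hx y hy
      have h1 : dist (ψ x) (ψ y) ≤ (L:ℝ) * dist x y := hlip.dist_le_mul x hx y hy
      have h2 : dist (φ x) (φ y) = (L:ℝ)⁻¹ * dist (ψ x) (ψ y) := by
        rw [Real.dist_eq, Real.dist_eq, hφ]
        rw [← mul_sub, abs_mul, abs_of_nonneg (by positivity)]
      have h3 : (L:ℝ)⁻¹ * dist (ψ x) (ψ y) ≤ (L:ℝ)⁻¹ * ((L:ℝ) * dist x y) :=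
        mul_le_mul_of_nonneg_left h1 (by positivity)
      have h4 : (L:ℝ)⁻¹ * ((L:ℝ) * dist x y) = dist x y := by field_simp
      rw [h2]
      simpa using h3.trans_eq h4
    have hmem : (∫ x, φ x ∂μ) - ∫ x, φ x ∂ν ∈ {r : ℝ | ∃ ψ : ℝ → ℝ,
        ConvexOn ℝ (Ici (0:ℝ)) ψ ∧ LipschitzOnWith 1 ψ (Ici (0:ℝ)) ∧
        r = ∫ x, ψ x ∂μ - ∫ x, ψ x ∂ν} := ⟨φ, hφc, hφlip, rfl⟩
    have hle : (∫ x, φ x ∂μ) - ∫ x, φ x ∂ν ≤ dirDist μ ν :=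
      le_csSup (dirDist_bddAbove hμ hν) hmem
    have hint : ∀ (κ : Measure ℝ), ∫ x, φ x ∂κ = (L:ℝ)⁻¹ * ∫ x, ψ x ∂κ := by
      intro κ; simp [hφ, integral_const_mul]
    rw [hint, hint] at hle
    calc (∫ x, ψ x ∂μ) - ∫ x, ψ x ∂ν
        = (L:ℝ) * ((L:ℝ)⁻¹ * (∫ x, ψ x ∂μ) - (L:ℝ)⁻¹ * ∫ x, ψ x ∂ν) := by
          field_simp
    _ ≤ (L:ℝ) * dirDist μ ν := mul_le_mul_of_nonneg_left hle (by positivity)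

/-- linear convergence rate for differences of convex payoffs. -/
theorem bamot_linear_rate (μb μa : Measure ℝ) (hb : IsP1 μb) (ha : IsP1 μa)
    (hord : CvxOrder μb μa)
    (ψa ψb : ℝ → ℝ) (La Lb : ℝ≥0)
    (hψa : ConvexOn ℝ (Ici (0:ℝ)) ψa) (hla : LipschitzOnWith La ψa (Ici (0:ℝ)))
    (hψb : ConvexOn ℝ (Ici (0:ℝ)) ψb) (hlb : LipschitzOnWith Lb ψb (Ici (0:ℝ))) :
    0 ≤ Pval μb μa (fun x => ψa x - ψb x) -
        ∫ x, (ψa x - ψb x) ∂((2:ℝ≥0)⁻¹ • μb + (2:ℝ≥0)⁻¹ • μa) ∧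
    Pval μb μa (fun x => ψa x - ψb x) -
        ∫ x, (ψa x - ψb x) ∂((2:ℝ≥0)⁻¹ • μb + (2:ℝ≥0)⁻¹ • μa)
      ≤ ((La : ℝ) + (Lb : ℝ)) * baDist μb μa := by
  set μm : Measure ℝ := (2:ℝ≥0)⁻¹ • μb + (2:ℝ≥0)⁻¹ • μa with hμm
  have hga := linGrowth_of_lipschitzOn hla
  have hgb := linGrowth_of_lipschitzOn hlb
  -- integrability
  have iab : Integrable ψa μb := integrable_linGrowth hb hψa hga
  have iaa : Integrable ψa μa := integrable_linGrowth ha hψa hga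
  have ibb : Integrable ψb μb := integrable_linGrowth hb hψb hgb
  have iba : Integrable ψb μa := integrable_linGrowth ha hψb hgb
  have hm : IsP1 μm := isP1_mid hb ha
  have hcl : CvxOrder μb μm := cvxOrder_mid_left hb ha hord
  have hcr : CvxOrder μm μa := cvxOrder_mid_right hb ha hord
  set S : Set ℝ := {r : ℝ | ∃ μ : Measure ℝ, IsP1 μ ∧ CvxOrder μb μ ∧ CvxOrder μ μa ∧
      r = ∫ x, (fun x => ψa x - ψb x) x ∂μ} with hS
  have hmemm : (∫ x, (fun x => ψa x - ψb x) x ∂μm) ∈ S := ⟨μm, hm, hcl, hcr, rfl⟩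
  have hub : ∀ r ∈ S, r ≤ (∫ x, ψa x ∂μa) - ∫ x, ψb x ∂μb := by
    rintro r ⟨μ, hμ, hc1, hc2, rfl⟩
    have i1 : Integrable ψa μ := integrable_linGrowth hμ hψa hga
    have i2 : Integrable ψb μ := integrable_linGrowth hμ hψb hgb
    simp only [integral_sub i1 i2]
    have h1 := hc2 ψa hψa hga
    have h2 := hc1 ψb hψb hgb
    linarith
  have hbdd : BddAbove S := ⟨_, hub⟩
  have hPval : Pval μb μa (fun x => ψa x - ψb x) = sSup S := rfl
  -- value at midpoint
  have hmid : ∫ x, (ψa x - ψb x) ∂μm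
      = ((∫ x, ψa x ∂μb) - ∫ x, ψb x ∂μb) / 2 + ((∫ x, ψa x ∂μa) - ∫ x, ψb x ∂μa) / 2 := by
    rw [hμm, integral_half_measure (f := fun x => ψa x - ψb x) μb μa (iab.sub ibb) (iaa.sub iba),
      integral_sub iab ibb, integral_sub iaa iba]
  constructor
  · have := le_csSup hbdd hmemm
    rw [hPval]
    simp only [sub_nonneg]
    exact this
  · rw [hPval]
    have hDa : (∫ x, ψa x ∂μa) - ∫ x, ψa x ∂μb ≤ (La:ℝ) * dirDist μa μb :=
      diff_le_dirDist ha hb hψa hla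
    have hDb : (∫ x, ψb x ∂μa) - ∫ x, ψb x ∂μb ≤ (Lb:ℝ) * dirDist μa μb :=
      diff_le_dirDist ha hb hψb hlb
    have hba : baDist μb μa = dirDist μa μb / 2 := by
      rw [baDist, dirDist_eq_zero hb ha hord]; ring
    rw [hba, hmid]
    have hsup : sSup S ≤ (∫ x, ψa x ∂μa) - ∫ x, ψb x ∂μb :=
      csSup_le ⟨_, hmemm⟩ hub
    have hDnonneg : 0 ≤ dirDist μa μb := by
      have h0mem : (0:ℝ) ∈ {r : ℝ | ∃ ψ : ℝ → ℝ, ConvexOn ℝ (Ici (0:ℝ)) ψ ∧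
          LipschitzOnWith 1 ψ (Ici (0:ℝ)) ∧ r = ∫ x, ψ x ∂μa - ∫ x, ψ x ∂μb} := by
        refine ⟨fun _ => 0, convexOn_const 0 (convex_Ici 0),
          ((LipschitzWith.const 0).weaken (zero_le_one)).lipschitzOnWith, by simp⟩
      exact le_csSup (dirDist_bddAbove ha hb) h0mem
    nlinarith [hsup, hDa, hDb]
end
end
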